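/- arXiv:1102.0700 — 8 statements merged into one kernel-verified Lean document; each statement's English description precedes it below -/
import Mathlib

section
/- Let (H^{2m+1}_{2k+1}) be a genus-1 chain. Then the anomaly relations hold: 5H^3_5 − 3H^5_3 = −(H^3_1)² + H^3_3·H^3_{−1}, and 7H^3_7 − 3H^7_3 = (1/2)H^3_{−1}·(H^3_1)² − 2H^3_3·(H^3_{−1})² − H^3_1·H^3_3. -/
/-- Genus-1 chain (stratum Σ₂ of Gr^(2)): `H m j` represents `H^{2(m+1)+1}_{2(j-1)+1}`,
i.e. row index `2m+3 ∈ {3,5,7,…}` and column index `2j−1 ∈ {−1,1,3,…}`.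
(C1) says `p₃² = λ³ + u₂λ² + u₁λ + u₀`, and (C2) says
`p_{2m+3} = λ·p_{2m+1} − H^{2m+1}_{−1}·p₃`. -/
def Genus1Chain (H : ℕ → ℕ → ℂ) : Prop :=
  (∀ n : ℕ, 1 ≤ n →
    2 * H 0 (n + 2) + 2 * H 0 0 * H 0 (n + 1)
      + ∑ i ∈ Finset.range n, H 0 (i + 1) * H 0 (n - i) = 0) ∧
  (∀ m j : ℕ, H (m + 1) j = H m (j + 1) - H m 0 * H 0 j)

/-- The anomaly relations for a genus-1 chain (`H 0 3 = H^3_5`, `H 0 4 = H^3_7`,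
`H 1 2 = H^5_3`, `H 2 2 = H^7_3`):
`5H^3_5 − 3H^5_3 = −(H^3_1)² + H^3_3H^3_{−1}` and
`7H^3_7 − 3H^7_3 = (1/2)H^3_{−1}(H^3_1)² − 2H^3_3(H^3_{−1})² − H^3_1H^3_3`. -/
theorem genus1_anomaly (H : ℕ → ℕ → ℂ) (hH : Genus1Chain H) :
    5 * H 0 3 - 3 * H 1 2 = -(H 0 1)^2 + H 0 2 * H 0 0 ∧
    7 * H 0 4 - 3 * H 2 2
      = (1/2) * H 0 0 * (H 0 1)^2 - 2 * H 0 2 * (H 0 0)^2 - H 0 1 * H 0 2 := by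
  obtain ⟨h1, h2⟩ := hH
  have e1 := h1 1 le_rfl
  have e2 := h1 2 (by norm_num)
  simp [Finset.sum_range_succ] at e1 e2
  have c12 := h2 0 2
  have c13 := h2 0 3
  have c10 := h2 0 0
  have c22 := h2 1 2
  norm_num at c12 c13 c10 c22
  constructor
  · linear_combination (-3 : ℂ) * c12 + e1
  · linear_combination (-3 : ℂ) * c22 - 3 * c13 + 3 * H 0 2 * c10 + 2 * e2
      - (H 0 0 / 2) * e1
end

section
/- There exists a family of polynomials P_{m,k} ∈ ℂ[X,Y,Z], indexed by m ≥ 1 and k ≥ −1 and independent of the chain, such that every genus-1 chain satisfies H^{2m+1}_{2k+1} = P_{m,k}(H^3_{−1}, H^3_1, H^3_3) for all m ≥ 1 and k ≥ −1. In other words, a genus-1 chain is completely determined by the three values H^3_{−1}, H^3_1, H^3_3 through universal polynomial formulas (the variety W_{1c} is three-dimensional). -/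
open MvPolynomial in
/-- Universal polynomials for the bottom row. -/
noncomputable def Qpoly : ℕ → MvPolynomial (Fin 3) ℂ
  | 0 => X 0
  | 1 => X 1
  | 2 => X 2
  | (n+3) => -(X 0 * Qpoly (n+2))
      - MvPolynomial.C (1/2 : ℂ) *
        ∑ i ∈ (Finset.range (n+1)).attach, Qpoly (i.1+1) * Qpoly (n+1-i.1)
  decreasing_by
  · omega
  · have := i.2; simp only [Finset.mem_range] at this; omega
  · omega

lemma Qpoly_zero : Qpoly 0 = MvPolynomial.X 0 := by rw [Qpoly]
lemma Qpoly_one : Qpoly 1 = MvPolynomial.X 1 := by rw [Qpoly]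
lemma Qpoly_two : Qpoly 2 = MvPolynomial.X 2 := by rw [Qpoly]
lemma Qpoly_succ (n : ℕ) : Qpoly (n+3) = -(MvPolynomial.X 0 * Qpoly (n+2))
      - MvPolynomial.C (1/2 : ℂ) *
        ∑ i ∈ (Finset.range (n+1)).attach, Qpoly (i.1+1) * Qpoly (n+1-i.1) := by
  rw [Qpoly]

/-- Universal polynomials for all rows. -/
noncomputable def Ppoly : ℕ → ℕ → MvPolynomial (Fin 3) ℂ
  | 0 => Qpoly
  | (m+1) => fun k => Ppoly m (k+1) - Ppoly m 0 * Qpoly k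

/-- A genus-1 chain is completely determined by the three values
`H^3_{−1} = H 0 0`, `H^3_1 = H 0 1`, `H^3_3 = H 0 2` through universal polynomial
formulas: the variety `W₁c` is three-dimensional. -/
theorem genus1_three_dimensional :
    ∃ P : ℕ → ℕ → MvPolynomial (Fin 3) ℂ,
      ∀ H : ℕ → ℕ → ℂ, Genus1Chain H →
        ∀ m k : ℕ, H m k = MvPolynomial.eval ![H 0 0, H 0 1, H 0 2] (P m k) := by
  refine ⟨Ppoly, ?_⟩
  intro H ⟨hC1, hC2⟩
  set v : Fin 3 → ℂ := ![H 0 0, H 0 1, H 0 2] with hv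
  have h0 : ∀ k, H 0 k = MvPolynomial.eval v (Qpoly k) := by
    intro k
    induction k using Nat.strong_induction_on with
    | _ k ih =>
      match k with
      | 0 => rw [Qpoly_zero]; simp [hv]
      | 1 => rw [Qpoly_one]; simp [hv]
      | 2 => rw [Qpoly_two]; simp [hv]
      | (n+3) =>
        have hc := hC1 (n+1) (by omega)
        have hsum : ∀ i ∈ Finset.range (n+1),
            H 0 (i+1) * H 0 (n+1-i)
              = MvPolynomial.eval v (Qpoly (i+1) * Qpoly (n+1-i)) := by
          intro i hi
          rw [Finset.mem_range] at hi
          rw [map_mul, ih (i+1) (by omega), ih (n+1-i) (by omega)]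
        have hH : H 0 (n+3) = -(H 0 0 * H 0 (n+2))
            - (1/2 : ℂ) * ∑ i ∈ Finset.range (n+1), H 0 (i+1) * H 0 (n+1-i) := by
          have h2 : (2:ℂ) * H 0 (n+3) = -(2 * H 0 0 * H 0 (n+2))
              - ∑ i ∈ Finset.range (n+1), H 0 (i+1) * H 0 (n+1-i) := by
            linear_combination hc
          field_simp at h2 ⊢
          linear_combination h2
        rw [hH, Qpoly_succ]
        rw [map_sub, map_neg, map_mul, map_mul, map_sum, MvPolynomial.eval_C]
        congr 1
        · rw [ih 0 (by omega), ih (n+2) (by omega)]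
          congr 1
          rw [Qpoly_zero]
        · congr 1
          rw [Finset.sum_attach (Finset.range (n+1))
            (fun i => MvPolynomial.eval v (Qpoly (i+1) * Qpoly (n+1-i)))]
          exact Finset.sum_congr rfl hsum
  intro m
  induction m with
  | zero => exact h0
  | succ m ihm =>
    intro k
    show H (m+1) k = MvPolynomial.eval v (Ppoly m (k+1) - Ppoly m 0 * Qpoly k)
    rw [hC2 m k, map_sub, map_mul, ← ihm (k+1), ← ihm 0, ← h0 k]
end

section
/- Let a, b, c : ℝ² → ℝ be continuously differentiable functions of (x₃,x₅) satisfying ∂a/∂x₅ = ∂(b − a²)/∂x₃, ∂b/∂x₅ = ∂(c − a·b)/∂x₃, and ∂c/∂x₅ = ∂(−(1/2)b² − 2a·c)/∂x₃. Define u₂ := 2a, u₁ := 2b + a², u₀ := 2c + 2a·b. Then (u₀,u₁,u₂) satisfies the dispersionless coupled KdV system: ∂u₂/∂x₅ = −(3/2)·(∂u₂/∂x₃)·u₂ + ∂u₁/∂x₃, ∂u₁/∂x₅ = ∂u₀/∂x₃ − (1/2)·(∂u₁/∂x₃)·u₂ − (∂u₂/∂x₃)·u₁, and ∂u₀/∂x₅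 = −(1/2)·(∂u₀/∂x₃)·u₂ − (∂u₂/∂x₃)·u₀. -/
/-- Partial derivative in the `x₃` direction on `ℝ²` with coordinates `(x₃, x₅)`. -/
noncomputable def pd3 (F : ℝ × ℝ → ℝ) : ℝ × ℝ → ℝ := fun p => fderiv ℝ F p (1, 0)

/-- Partial derivative in the `x₅` direction on `ℝ²` with coordinates `(x₃, x₅)`. -/
noncomputable def pd5 (F : ℝ × ℝ → ℝ) : ℝ × ℝ → ℝ := fun p => fderiv ℝ F p (0, 1)

section helpers

variable {f g : ℝ × ℝ → ℝ} {p v : ℝ × ℝ}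

lemma pdv_add (hf : DifferentiableAt ℝ f p) (hg : DifferentiableAt ℝ g p) :
    fderiv ℝ (fun q => f q + g q) p v = fderiv ℝ f p v + fderiv ℝ g p v := by
  rw [fderiv_fun_add hf hg]; simp

lemma pdv_sub (hf : DifferentiableAt ℝ f p) (hg : DifferentiableAt ℝ g p) :
    fderiv ℝ (fun q => f q - g q) p v = fderiv ℝ f p v - fderiv ℝ g p v := by
  rw [fderiv_fun_sub hf hg]; simp

lemma pdv_mul (hf : DifferentiableAt ℝ f p) (hg : DifferentiableAt ℝ g p) :
    fderiv ℝ (fun q => f q * g q) p v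
      = fderiv ℝ f p v * g p + f p * fderiv ℝ g p v := by
  rw [fderiv_fun_mul hf hg]; simp; ring

lemma pdv_const_mul (k : ℝ) (hf : DifferentiableAt ℝ f p) :
    fderiv ℝ (fun q => k * f q) p v = k * fderiv ℝ f p v := by
  rw [fderiv_const_mul hf]; simp

end helpers

/-- If `a = H^3_{−1}`, `b = H^3_1`, `c = H^3_3` satisfy the closedness conditions
`∂a/∂x₅ = ∂(b−a²)/∂x₃`, `∂b/∂x₅ = ∂(c−ab)/∂x₃`, `∂c/∂x₅ = ∂(−(1/2)b²−2ac)/∂x₃`,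
then `u₂ := 2a`, `u₁ := 2b + a²`, `u₀ := 2c + 2ab` satisfy the dispersionless
coupled KdV system. -/
theorem dcKdV_from_closedness (a b c : ℝ × ℝ → ℝ)
    (ha : ContDiff ℝ 1 a) (hb : ContDiff ℝ 1 b) (hc : ContDiff ℝ 1 c)
    (h1 : ∀ p, pd5 a p = pd3 (fun q => b q - (a q)^2) p)
    (h2 : ∀ p, pd5 b p = pd3 (fun q => c q - a q * b q) p)
    (h3 : ∀ p, pd5 c p = pd3 (fun q => -(1/2) * (b q)^2 - 2 * a q * c q) p) :
    (∀ p, pd5 (fun q => 2 * a q) p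
        = -(3/2) * pd3 (fun q => 2 * a q) p * (2 * a p)
          + pd3 (fun q => 2 * b q + (a q)^2) p) ∧
    (∀ p, pd5 (fun q => 2 * b q + (a q)^2) p
        = pd3 (fun q => 2 * c q + 2 * a q * b q) p
          - (1/2) * pd3 (fun q => 2 * b q + (a q)^2) p * (2 * a p)
          - pd3 (fun q => 2 * a q) p * (2 * b p + (a p)^2)) ∧
    (∀ p, pd5 (fun q => 2 * c q + 2 * a q * b q) p
        = -(1/2) * pd3 (fun q => 2 * c q + 2 * a q * b q) p * (2 * a p)
          - pd3 (fun q => 2 * a q) p * (2 * c p + 2 * a p * b p)) := by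
  have Da : Differentiable ℝ a := ha.differentiable one_ne_zero
  have Db : Differentiable ℝ b := hb.differentiable one_ne_zero
  have Dc : Differentiable ℝ c := hc.differentiable one_ne_zero
  simp only [pd3, pd5, pow_two] at h1 h2 h3 ⊢
  refine ⟨fun p => ?_, fun p => ?_, fun p => ?_⟩ <;>
    obtain ⟨da, db, dc, h1p, h2p, h3p⟩ :
        _ ∧ _ ∧ _ ∧ _ ∧ _ ∧ _ := ⟨Da p, Db p, Dc p, h1 p, h2 p, h3 p⟩
  all_goals
    rw [pdv_sub db (da.fun_mul da), pdv_mul da da] at h1p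
    rw [pdv_sub dc (da.fun_mul db), pdv_mul da db] at h2p
    rw [pdv_sub ((db.fun_mul db).const_mul _) ((da.const_mul 2).fun_mul dc),
        pdv_const_mul _ (db.fun_mul db), pdv_mul db db,
        pdv_mul (da.const_mul 2) dc, pdv_const_mul 2 da] at h3p
    simp only [pdv_const_mul 2 da, pdv_const_mul 2 db, pdv_const_mul 2 dc,
        pdv_add (db.const_mul 2) (da.fun_mul da), pdv_mul da da,
        pdv_add (dc.const_mul 2) ((da.const_mul 2).fun_mul db),
        pdv_mul (da.const_mul 2) db]
  · linear_combination 2 * h1p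
  · linear_combination 2 * h2p + 2 * a p * h1p
  · linear_combination 2 * h3p + 2 * b p * h1p + 2 * a p * h2p
end

section
/- Let u₀, u₁, u₂ : ℝ² → ℝ be continuously differentiable functions of (x₃,x₅) satisfying the dispersionless coupled KdV system: ∂u₂/∂x₅ = −(3/2)·(∂u₂/∂x₃)·u₂ + ∂u₁/∂x₃, ∂u₁/∂x₅ = ∂u₀/∂x₃ − (1/2)·(∂u₁/∂x₃)·u₂ − (∂u₂/∂x₃)·u₁, ∂u₀/∂x₅ = −(1/2)·(∂u₀/∂x₃)·u₂ − (∂u₂/∂x₃)·u₀. Define the moduli g₂ := u₁ − (1/3)u₂² and g₃ := u₀ + (2/27)u₂³ − (1/3)u₁u₂. Then: ∂g₂/∂x₅ = ∂g₃/∂x₃ − (5/6)·(∂g₂/∂x₃)·u₂ − (2/3)·(∂u₂/∂x₃)·g₂, ∂g₃/∂x₅ = −(5/6)·(∂g₃/∂x₃)·u₂ − (1/3)·(∂g₂/∂x₃)·g₂ − (∂u₂/∂x₃)·g₃, and ∂u₂/∂x₅ = ∂g₂/∂x₃ − (5/6)·(∂u₂/∂x₃)·u₂. -/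
lemma fderiv_g2 (u₁ u₂ : ℝ × ℝ → ℝ) (h1 : ContDiff ℝ 1 u₁) (h2 : ContDiff ℝ 1 u₂)
    (p : ℝ × ℝ) (v : ℝ × ℝ) :
    fderiv ℝ (fun q => u₁ q - (1/3) * (u₂ q)^2) p v
      = fderiv ℝ u₁ p v - (1/3) * (2 * u₂ p * fderiv ℝ u₂ p v) := by
  have H1 := (h1.differentiable one_ne_zero p).hasFDerivAt
  have H2 := (h2.differentiable one_ne_zero p).hasFDerivAt
  have Hsq : HasFDerivAt (fun q => (u₂ q)^2)
      (u₂ p • fderiv ℝ u₂ p + u₂ p • fderiv ℝ u₂ p) p := by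
    simpa [pow_two, Pi.mul_def] using H2.mul H2
  have H : HasFDerivAt (fun q => u₁ q - (1/3) * (u₂ q)^2)
      (fderiv ℝ u₁ p - (1/3 : ℝ) • (u₂ p • fderiv ℝ u₂ p + u₂ p • fderiv ℝ u₂ p)) p :=
    H1.sub (Hsq.const_mul _)
  rw [H.fderiv]; simp; ring

lemma fderiv_g3 (u₀ u₁ u₂ : ℝ × ℝ → ℝ)
    (h0 : ContDiff ℝ 1 u₀) (h1 : ContDiff ℝ 1 u₁) (h2 : ContDiff ℝ 1 u₂)
    (p : ℝ × ℝ) (v : ℝ × ℝ) :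
    fderiv ℝ (fun q => u₀ q + (2/27) * (u₂ q)^3 - (1/3) * u₁ q * u₂ q) p v
      = fderiv ℝ u₀ p v + (2/27) * (3 * (u₂ p)^2 * fderiv ℝ u₂ p v)
        - (1/3) * (fderiv ℝ u₁ p v * u₂ p + u₁ p * fderiv ℝ u₂ p v) := by
  have H0 := (h0.differentiable one_ne_zero p).hasFDerivAt
  have H1 := (h1.differentiable one_ne_zero p).hasFDerivAt
  have H2 := (h2.differentiable one_ne_zero p).hasFDerivAt
  have Hsq : HasFDerivAt (fun q => (u₂ q)^2)
      (u₂ p • fderiv ℝ u₂ p + u₂ p • fderiv ℝ u₂ p) p := by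
    simpa [pow_two, Pi.mul_def] using H2.mul H2
  have Hcube : HasFDerivAt (fun q => (u₂ q)^3)
      (u₂ p • (u₂ p • fderiv ℝ u₂ p + u₂ p • fderiv ℝ u₂ p)
        + (u₂ p)^2 • fderiv ℝ u₂ p) p := by
    simpa [pow_succ, pow_two, mul_assoc, Pi.mul_def] using H2.mul Hsq
  have H12 : HasFDerivAt (fun q => u₁ q * u₂ q)
      (u₁ p • fderiv ℝ u₂ p + u₂ p • fderiv ℝ u₁ p) p := H1.mul H2
  have H : HasFDerivAt (fun q => u₀ q + (2/27) * (u₂ q)^3 - (1/3) * u₁ q * u₂ q)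
      (fderiv ℝ u₀ p + (2/27 : ℝ) • (u₂ p • (u₂ p • fderiv ℝ u₂ p + u₂ p • fderiv ℝ u₂ p)
        + (u₂ p)^2 • fderiv ℝ u₂ p)
        - (1/3 : ℝ) • (u₁ p • fderiv ℝ u₂ p + u₂ p • fderiv ℝ u₁ p)) p :=
    (H0.add (Hcube.const_mul _)).sub (by simpa [mul_assoc] using H12.const_mul (1/3 : ℝ))
  rw [H.fderiv]; simp; ring

/-- If `u₀,u₁,u₂` satisfy the dispersionless coupled KdV system, then the
Weierstrass moduli `g₂ := u₁ − (1/3)u₂²`, `g₃ := u₀ + (2/27)u₂³ − (1/3)u₁u₂`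
satisfy the stated evolution equations. -/
theorem dcKdV_moduli_evolution (u₀ u₁ u₂ : ℝ × ℝ → ℝ)
    (h0 : ContDiff ℝ 1 u₀) (h1 : ContDiff ℝ 1 u₁) (h2 : ContDiff ℝ 1 u₂)
    (e2 : ∀ p, pd5 u₂ p = -(3/2) * pd3 u₂ p * u₂ p + pd3 u₁ p)
    (e1 : ∀ p, pd5 u₁ p = pd3 u₀ p - (1/2) * pd3 u₁ p * u₂ p - pd3 u₂ p * u₁ p)
    (e0 : ∀ p, pd5 u₀ p = -(1/2) * pd3 u₀ p * u₂ p - pd3 u₂ p * u₀ p) :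
    (∀ p, pd5 (fun q => u₁ q - (1/3) * (u₂ q)^2) p
        = pd3 (fun q => u₀ q + (2/27) * (u₂ q)^3 - (1/3) * u₁ q * u₂ q) p
          - (5/6) * pd3 (fun q => u₁ q - (1/3) * (u₂ q)^2) p * u₂ p
          - (2/3) * pd3 u₂ p * (u₁ p - (1/3) * (u₂ p)^2)) ∧
    (∀ p, pd5 (fun q => u₀ q + (2/27) * (u₂ q)^3 - (1/3) * u₁ q * u₂ q) p
        = -(5/6) * pd3 (fun q => u₀ q + (2/27) * (u₂ q)^3 - (1/3) * u₁ q * u₂ q) p * u₂ p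
          - (1/3) * pd3 (fun q => u₁ q - (1/3) * (u₂ q)^2) p * (u₁ p - (1/3) * (u₂ p)^2)
          - pd3 u₂ p * (u₀ p + (2/27) * (u₂ p)^3 - (1/3) * u₁ p * u₂ p)) ∧
    (∀ p, pd5 u₂ p
        = pd3 (fun q => u₁ q - (1/3) * (u₂ q)^2) p - (5/6) * pd3 u₂ p * u₂ p) := by
  refine ⟨fun p => ?_, fun p => ?_, fun p => ?_⟩ <;>
  · simp only [pd3, pd5, fderiv_g2 u₁ u₂ h1 h2, fderiv_g3 u₀ u₁ u₂ h0 h1 h2]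
    have E0 := e0 p; have E1 := e1 p; have E2 := e2 p
    simp only [pd3, pd5] at E0 E1 E2
    simp only [E0, E1, E2]
    ring
end

section
/- Let u₁, u₂ : ℝ² → ℝ be continuously differentiable functions of (x₃,x₅) satisfying the dispersionless Jaulent–Miodek system: ∂u₂/∂x₅ = −(3/2)·(∂u₂/∂x₃)·u₂ + ∂u₁/∂x₃ and ∂u₁/∂x₅ = −(1/2)·(∂u₁/∂x₃)·u₂ − (∂u₂/∂x₃)·u₁. Define u := −u₂ and v := −u₁ + (1/4)u₂², and introduce variables x := x₃ and t := −x₅. Then (u,v) satisfies the 1-layer Benney (dispersionless NLS) system: ∂u/∂t + u·∂u/∂x + ∂v/∂x = 0 and ∂v/∂t + ∂(u·v)/∂x = 0. -/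
/-- If `u₁,u₂` satisfy the dispersionless Jaulent–Miodek system, then
`u := −u₂`, `v := −u₁ + (1/4)u₂²` satisfy the 1-layer Benney (dispersionless NLS)
system in the variables `x := x₃`, `t := −x₅` (so `∂/∂t = −∂/∂x₅`). -/
theorem benney_from_jaulentMiodek (u₁ u₂ : ℝ × ℝ → ℝ)
    (h1 : ContDiff ℝ 1 u₁) (h2 : ContDiff ℝ 1 u₂)
    (e2 : ∀ p, pd5 u₂ p = -(3/2) * pd3 u₂ p * u₂ p + pd3 u₁ p)
    (e1 : ∀ p, pd5 u₁ p = -(1/2) * pd3 u₁ p * u₂ p - pd3 u₂ p * u₁ p) :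
    (∀ p, -(pd5 (fun q => -u₂ q) p)
        + (-u₂ p) * pd3 (fun q => -u₂ q) p
        + pd3 (fun q => -u₁ q + (1/4) * (u₂ q)^2) p = 0) ∧
    (∀ p, -(pd5 (fun q => -u₁ q + (1/4) * (u₂ q)^2) p)
        + pd3 (fun q => (-u₂ q) * (-u₁ q + (1/4) * (u₂ q)^2)) p = 0) := by
  have d1 : ∀ p, DifferentiableAt ℝ u₁ p := fun p => (h1.differentiable one_ne_zero) p
  have d2 : ∀ p, DifferentiableAt ℝ u₂ p := fun p => (h2.differentiable one_ne_zero) p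
  have key : ∀ p w,
      fderiv ℝ (fun q => -u₂ q) p w = -(fderiv ℝ u₂ p w) ∧
      fderiv ℝ (fun q => -u₁ q + (1/4) * (u₂ q)^2) p w
        = -(fderiv ℝ u₁ p w) + (1/2) * (u₂ p * fderiv ℝ u₂ p w) ∧
      fderiv ℝ (fun q => (-u₂ q) * (-u₁ q + (1/4) * (u₂ q)^2)) p w
        = (-(fderiv ℝ u₂ p w)) * (-u₁ p + (1/4) * (u₂ p)^2)
          + (-u₂ p) * (-(fderiv ℝ u₁ p w) + (1/2) * (u₂ p * fderiv ℝ u₂ p w)) := by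
    intro p w
    have H1 := (d1 p).hasFDerivAt
    have H2 := (d2 p).hasFDerivAt
    have Hn : HasFDerivAt (fun q => -u₂ q) (-(fderiv ℝ u₂ p)) p := H2.neg
    have Hs : HasFDerivAt (fun q => (u₂ q)^2)
        (u₂ p • fderiv ℝ u₂ p + u₂ p • fderiv ℝ u₂ p) p := by
      simpa [pow_two] using H2.fun_mul H2
    have Hv : HasFDerivAt (fun q => -u₁ q + (1/4) * (u₂ q)^2)
        (-(fderiv ℝ u₁ p) + (1/4 : ℝ) • (u₂ p • fderiv ℝ u₂ p + u₂ p • fderiv ℝ u₂ p)) p :=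
      H1.neg.add (Hs.const_mul (1/4))
    have Hm := Hn.fun_mul Hv
    refine ⟨by rw [Hn.fderiv]; simp, by rw [Hv.fderiv]; simp; ring, by rw [Hm.fderiv]; simp; ring⟩
  have e1' := e1; have e2' := e2
  simp only [pd3, pd5] at e1' e2' ⊢
  constructor
  · intro p
    rw [(key p (0,1)).1, (key p (1,0)).1, (key p (1,0)).2.1]
    linear_combination e2' p
  · intro p
    rw [(key p (0,1)).2.1, (key p (1,0)).2.2]
    linear_combination e1' p - (1/2) * u₂ p * e2' p
end

section
/- Let φ : ℝ² → ℝ be three times continuously differentiable in (x₃,x₅), with ∂²φ/∂x₃² nowhere zero, satisfying the Hirota-type equation φ_{x₃x₃}·φ_{x₅x₅} − (φ_{x₃x₅})² + (φ_{x₃x₃})³ = 0, where subscripts denote partial derivatives. Define u := φ_{x₃x₅}/φ_{x₃x₃} and v := −2φ_{x₃x₃}, and introduce variables x := x₃ and t := −x₅. Then (u,v) satisfies the 1-layer Benney system: ∂u/∂t + u·∂u/∂x + ∂v/∂x = 0 and ∂v/∂t + ∂(u·v)/∂x = 0. -/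
lemma pd3_contDiff {n : ℕ} {F : ℝ × ℝ → ℝ} (hF : ContDiff ℝ (n+1) F) :
    ContDiff ℝ n (pd3 F) := by
  have h : ContDiff ℝ n (fderiv ℝ F) := hF.fderiv_right (by exact_mod_cast le_refl ((n:ℕ∞)+1))
  exact h.clm_apply contDiff_const

lemma pd5_contDiff {n : ℕ} {F : ℝ × ℝ → ℝ} (hF : ContDiff ℝ (n+1) F) :
    ContDiff ℝ n (pd5 F) := by
  have h : ContDiff ℝ n (fderiv ℝ F) := hF.fderiv_right (by exact_mod_cast le_refl ((n:ℕ∞)+1))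
  exact h.clm_apply contDiff_const

lemma pd_eval {f : ℝ × ℝ → ℝ} (hf : ContDiff ℝ 2 f) (p v w : ℝ × ℝ) :
    fderiv ℝ (fun q => fderiv ℝ f q v) p w = fderiv ℝ (fderiv ℝ f) p w v := by
  have hf' : DifferentiableAt ℝ (fderiv ℝ f) p := by
    have : ContDiff ℝ 1 (fderiv ℝ f) := hf.fderiv_right (by exact_mod_cast le_refl (2:ℕ∞))
    exact (this.differentiable one_ne_zero) p
  have h := fderiv_clm_apply (𝕜 := ℝ) hf' (differentiableAt_const v)
  simp only [fderiv_fun_const, Pi.zero_apply] at h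
  rw [h]
  simp

lemma pd_comm {f : ℝ × ℝ → ℝ} (hf : ContDiff ℝ 2 f) (p : ℝ × ℝ) :
    pd3 (pd5 f) p = pd5 (pd3 f) p := by
  have hsymm : IsSymmSndFDerivAt ℝ f p :=
    (hf.contDiffAt).isSymmSndFDerivAt (by simp)
  show fderiv ℝ (fun q => fderiv ℝ f q (0,1)) p (1,0)
      = fderiv ℝ (fun q => fderiv ℝ f q (1,0)) p (0,1)
  rw [pd_eval hf, pd_eval hf]
  exact hsymm _ _

lemma pd_mul {f g : ℝ × ℝ → ℝ} {p : ℝ × ℝ} (v : ℝ × ℝ)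
    (hf : DifferentiableAt ℝ f p) (hg : DifferentiableAt ℝ g p) :
    fderiv ℝ (fun q => f q * g q) p v
      = fderiv ℝ f p v * g p + f p * fderiv ℝ g p v := by
  rw [fderiv_fun_mul hf hg]
  simp; ring

lemma pd_div {f g : ℝ × ℝ → ℝ} {p : ℝ × ℝ} (v : ℝ × ℝ)
    (hf : DifferentiableAt ℝ f p) (hg : DifferentiableAt ℝ g p) (h0 : g p ≠ 0) :
    fderiv ℝ (fun q => f q / g q) p v
      = (fderiv ℝ f p v * g p - f p * fderiv ℝ g p v) / (g p)^2 := by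
  have hinv : HasFDerivAt (fun q => (g q)⁻¹) ((-(g p ^ 2)⁻¹) • fderiv ℝ g p) p :=
    (hasDerivAt_inv h0).comp_hasFDerivAt p hg.hasFDerivAt
  have h : HasFDerivAt (fun q => f q / g q)
      (f p • ((-(g p ^ 2)⁻¹) • fderiv ℝ g p) + (g p)⁻¹ • fderiv ℝ f p) p := by
    simp only [div_eq_mul_inv]
    exact hf.hasFDerivAt.mul hinv
  rw [h.fderiv]
  simp only [ContinuousLinearMap.add_apply, ContinuousLinearMap.smul_apply, smul_eq_mul]
  field_simp
  ring

/-- If `φ` is C³, `φ_{x₃x₃}` is nowhere zero and `φ` satisfies the Hirota-type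
equation `φ_{x₃x₃}φ_{x₅x₅} − (φ_{x₃x₅})² + (φ_{x₃x₃})³ = 0`, then
`u := φ_{x₃x₅}/φ_{x₃x₃}`, `v := −2φ_{x₃x₃}` satisfy the 1-layer Benney system in
the variables `x := x₃`, `t := −x₅` (so `∂/∂t = −∂/∂x₅`). -/
theorem benney_from_hirota (φ : ℝ × ℝ → ℝ) (hφ : ContDiff ℝ 3 φ)
    (hne : ∀ p, pd3 (pd3 φ) p ≠ 0)
    (hHirota : ∀ p, pd3 (pd3 φ) p * pd5 (pd5 φ) p - (pd5 (pd3 φ) p)^2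
        + (pd3 (pd3 φ) p)^3 = 0) :
    (∀ p, -(pd5 (fun q => pd5 (pd3 φ) q / pd3 (pd3 φ) q) p)
        + (pd5 (pd3 φ) p / pd3 (pd3 φ) p)
          * pd3 (fun q => pd5 (pd3 φ) q / pd3 (pd3 φ) q) p
        + pd3 (fun q => -2 * pd3 (pd3 φ) q) p = 0) ∧
    (∀ p, -(pd5 (fun q => -2 * pd3 (pd3 φ) q) p)
        + pd3 (fun q => (pd5 (pd3 φ) q / pd3 (pd3 φ) q) * (-2 * pd3 (pd3 φ) q)) p
          = 0) := by
  set a := pd3 (pd3 φ) with ha_def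
  set b := pd5 (pd3 φ) with hb_def
  set c := pd5 (pd5 φ) with hc_def
  have hφ3 : ContDiff ℝ (2+1 : ℕ) φ := by exact_mod_cast hφ
  have h3 : ContDiff ℝ 2 (pd3 φ) := pd3_contDiff hφ3
  have h5 : ContDiff ℝ 2 (pd5 φ) := pd5_contDiff hφ3
  have h32 : ContDiff ℝ (1+1 : ℕ) (pd3 φ) := by exact_mod_cast h3
  have h52 : ContDiff ℝ (1+1 : ℕ) (pd5 φ) := by exact_mod_cast h5
  have haC : ContDiff ℝ 1 a := pd3_contDiff h32
  have hbC : ContDiff ℝ 1 b := pd5_contDiff h32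
  have hcC : ContDiff ℝ 1 c := pd5_contDiff h52
  have haD : ∀ p, DifferentiableAt ℝ a p := fun p => (haC.differentiable one_ne_zero) p
  have hbD : ∀ p, DifferentiableAt ℝ b p := fun p => (hbC.differentiable one_ne_zero) p
  have hcD : ∀ p, DifferentiableAt ℝ c p := fun p => (hcC.differentiable one_ne_zero) p
  -- symmetry facts
  have hφ2 : ContDiff ℝ 2 φ := hφ.of_le (by norm_num)
  have hswap : pd5 (pd3 φ) = pd3 (pd5 φ) := by
    funext p
    exact (pd_comm hφ2 p).symm
  have s1 : ∀ p, pd5 a p = pd3 b p := by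
    intro p
    exact (pd_comm h3 p).symm
  have s2 : ∀ p, pd5 b p = pd3 c p := by
    intro p
    calc pd5 b p = pd5 (pd3 (pd5 φ)) p := by rw [hb_def, hswap]
    _ = pd3 (pd5 (pd5 φ)) p := (pd_comm h5 p).symm
  -- differentiated Hirota identity in x₃
  have dH : ∀ p, pd3 a p * c p + a p * pd3 c p - 2 * b p * pd3 b p
      + 3 * (a p)^2 * pd3 a p = 0 := by
    intro p
    have hzero : (fun q => a q * c q - b q * b q + a q * (a q * a q)) = (fun _ => (0:ℝ)) := by
      funext q; linear_combination hHirota q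
    have h0 : fderiv ℝ (fun q => a q * c q - b q * b q + a q * (a q * a q)) p (1,0) = 0 := by
      rw [hzero]; simp
    have dac : DifferentiableAt ℝ (fun q => a q * c q) p := (haD p).mul (hcD p)
    have dbb : DifferentiableAt ℝ (fun q => b q * b q) p := (hbD p).mul (hbD p)
    have daa : DifferentiableAt ℝ (fun q => a q * a q) p := (haD p).mul (haD p)
    have daaa : DifferentiableAt ℝ (fun q => a q * (a q * a q)) p := (haD p).mul daa
    rw [fderiv_fun_add (dac.fun_sub dbb) daaa, fderiv_fun_sub dac dbb] at h0
    simp only [ContinuousLinearMap.add_apply, ContinuousLinearMap.sub_apply] at h0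
    rw [pd_mul _ (haD p) (hcD p), pd_mul _ (hbD p) (hbD p),
      pd_mul _ (haD p) daa, pd_mul _ (haD p) (haD p)] at h0
    show fderiv ℝ a p (1,0) * c p + a p * fderiv ℝ c p (1,0)
      - 2 * b p * fderiv ℝ b p (1,0) + 3 * (a p)^2 * fderiv ℝ a p (1,0) = 0
    linear_combination h0
  constructor
  · intro p
    have h1 : pd5 (fun q => b q / a q) p
        = (pd5 b p * a p - b p * pd5 a p) / (a p)^2 :=
      pd_div (0,1) (hbD p) (haD p) (hne p)
    have h2 : pd3 (fun q => b q / a q) p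
        = (pd3 b p * a p - b p * pd3 a p) / (a p)^2 :=
      pd_div (1,0) (hbD p) (haD p) (hne p)
    have h4 : pd3 (fun q => -2 * a q) p = -2 * pd3 a p := by
      show fderiv ℝ (fun q => -2 * a q) p (1,0) = _
      rw [fderiv_const_mul (haD p)]
      simp [pd3]
    rw [h1, h2, h4, s1 p, s2 p]
    have hH := hHirota p
    have hdH := dH p
    have hA := hne p
    field_simp
    linear_combination (-(a p)) * hdH + pd3 a p * hH
  · intro p
    have heq : (fun q => (b q / a q) * (-2 * a q)) = (fun q => -2 * b q) := by
      funext q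
      field_simp [hne q]
    rw [heq]
    have h4 : pd3 (fun q => -2 * b q) p = -2 * pd3 b p := by
      show fderiv ℝ (fun q => -2 * b q) p (1,0) = _
      rw [fderiv_const_mul (hbD p)]
      simp [pd3]
    have h5' : pd5 (fun q => -2 * a q) p = -2 * pd5 a p := by
      show fderiv ℝ (fun q => -2 * a q) p (0,1) = _
      rw [fderiv_const_mul (haD p)]
      simp [pd5]
    rw [h4, h5', s1 p]
    ring
end

section
/- Let f : ℝ → ℝ be twice continuously differentiable, and for x₅ ≠ 0 define Φ(x₃,x₅) := f(x₃²/x₅). Then at every point with x₅ ≠ 0, writing y := x₃²/x₅, one has the identity Φ_{x₃x₃}·Φ_{x₅x₅} − (Φ_{x₃x₅})² + (Φ_{x₃x₃})³ = (2/x₅³)·[ y²·f'(y)·f''(y) + 4·( f'(y) + 2y·f''(y) )³ ]. In particular, Φ satisfies the Hirota-type equation Φ_{x₃x₃}Φ_{x₅x₅} − (Φ_{x₃x₅})² + (Φ_{x₃x₃})³ = 0 on {x₅ ≠ 0} if and only if ϕ := f' satisfies the ODE y²·ϕ·ϕ' + 4·(ϕ + 2y·ϕ')³ = 0 for all y ∈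 ℝ. -/
/-- The self-similar ansatz `Φ(x₃,x₅) = f(x₃²/x₅)`. -/
noncomputable def selfSim (f : ℝ → ℝ) : ℝ × ℝ → ℝ := fun p => f (p.1 ^ 2 / p.2)

section aux

variable {f : ℝ → ℝ}

private lemma hx2 (p : ℝ × ℝ) : HasFDerivAt (fun p : ℝ × ℝ => p.1 ^ 2)
    ((p.1 : ℝ) • (ContinuousLinearMap.fst ℝ ℝ ℝ) + (p.1 : ℝ) • (ContinuousLinearMap.fst ℝ ℝ ℝ)) p := by
  simpa only [Pi.mul_def, Pi.pow_def, ← pow_two] using (hasFDerivAt_fst (𝕜 := ℝ) (p := p)).mul hasFDerivAt_fst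

private lemma hinv {p : ℝ × ℝ} (hp : p.2 ≠ 0) : HasFDerivAt (fun p : ℝ × ℝ => (p.2)⁻¹)
    (-((p.2^2)⁻¹ • (ContinuousLinearMap.snd ℝ ℝ ℝ))) p := by
  simpa [Function.comp_def] using (hasDerivAt_inv hp).comp_hasFDerivAt p (hasFDerivAt_snd (𝕜 := ℝ) (p := p))

private lemma Hq {p : ℝ × ℝ} (hp : p.2 ≠ 0) :
    HasFDerivAt (fun p : ℝ × ℝ => p.1 ^ 2 / p.2)
      ((p.1 ^ 2) • (-((p.2^2)⁻¹ • (ContinuousLinearMap.snd ℝ ℝ ℝ)))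
        + (p.2)⁻¹ • ((p.1 : ℝ) • (ContinuousLinearMap.fst ℝ ℝ ℝ)
            + (p.1 : ℝ) • (ContinuousLinearMap.fst ℝ ℝ ℝ))) p := by
  simpa only [Pi.mul_def, div_eq_mul_inv] using (hx2 p).mul (hinv hp)

private lemma hgC1 (hf : ContDiff ℝ 2 f) : ContDiff ℝ 1 (deriv f) := by
  rw [show (2 : WithTop ℕ∞) = 1 + 1 from rfl] at hf
  exact (contDiff_succ_iff_deriv.mp hf).2.2

private lemma HΦ (hf : ContDiff ℝ 2 f) {p : ℝ × ℝ} (hp : p.2 ≠ 0) :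
    HasFDerivAt (selfSim f)
      ((deriv f (p.1^2/p.2)) • ((p.1 ^ 2) • (-((p.2^2)⁻¹ • (ContinuousLinearMap.snd ℝ ℝ ℝ)))
        + (p.2)⁻¹ • ((p.1 : ℝ) • (ContinuousLinearMap.fst ℝ ℝ ℝ)
            + (p.1 : ℝ) • (ContinuousLinearMap.fst ℝ ℝ ℝ)))) p :=
  (((hf.differentiable (by norm_num)) _).hasDerivAt).comp_hasFDerivAt p (Hq hp)

private lemma pd3_eq (hf : ContDiff ℝ 2 f) {p : ℝ × ℝ} (hp : p.2 ≠ 0) :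
    pd3 (selfSim f) p = deriv f (p.1^2/p.2) * (2 * p.1 * (p.2)⁻¹) := by
  show fderiv ℝ (selfSim f) p (1, 0) = _
  rw [(HΦ hf hp).fderiv]; simp; ring

private lemma pd5_eq (hf : ContDiff ℝ 2 f) {p : ℝ × ℝ} (hp : p.2 ≠ 0) :
    pd5 (selfSim f) p = deriv f (p.1^2/p.2) * (-(p.1^2 * (p.2^2)⁻¹)) := by
  show fderiv ℝ (selfSim f) p (0, 1) = _
  rw [(HΦ hf hp).fderiv]; simp

private lemma hUopen : IsOpen {p : ℝ × ℝ | p.2 ≠ 0} :=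
  IsOpen.preimage continuous_snd isOpen_compl_singleton

/-- derivative of the second derivative argument -/
private lemma hg' (hf : ContDiff ℝ 2 f) (y : ℝ) :
    HasDerivAt (deriv f) (deriv (deriv f) y) y :=
  (((hgC1 hf).differentiable one_ne_zero) y).hasDerivAt

private lemma H3 (hf : ContDiff ℝ 2 f) {p : ℝ × ℝ} (hp : p.2 ≠ 0) :
    HasFDerivAt (fun p : ℝ × ℝ => deriv f (p.1^2/p.2) * (2 * p.1 * (p.2)⁻¹))
      ((deriv f (p.1^2/p.2)) • ((2 * p.1) • (-((p.2^2)⁻¹ • (ContinuousLinearMap.snd ℝ ℝ ℝ)))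
          + (p.2)⁻¹ • ((2:ℝ) • (ContinuousLinearMap.fst ℝ ℝ ℝ)))
        + (2 * p.1 * (p.2)⁻¹) • ((deriv (deriv f) (p.1^2/p.2)) •
            ((p.1 ^ 2) • (-((p.2^2)⁻¹ • (ContinuousLinearMap.snd ℝ ℝ ℝ)))
              + (p.2)⁻¹ • ((p.1 : ℝ) • (ContinuousLinearMap.fst ℝ ℝ ℝ)
                  + (p.1 : ℝ) • (ContinuousLinearMap.fst ℝ ℝ ℝ))))) p :=
  by exact (((hg' hf (p.1^2/p.2)).comp_hasFDerivAt p (Hq hp)).mul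
    (((hasFDerivAt_fst (𝕜 := ℝ) (p := p)).const_mul 2).mul (hinv hp)))

private lemma H5 (hf : ContDiff ℝ 2 f) {p : ℝ × ℝ} (hp : p.2 ≠ 0) :
    HasFDerivAt (fun p : ℝ × ℝ => deriv f (p.1^2/p.2) * (-(p.1^2 * (p.2^2)⁻¹)))
      ((deriv f (p.1^2/p.2)) • (-((p.1 ^ 2) • ((p.2)⁻¹ • (-((p.2^2)⁻¹ • (ContinuousLinearMap.snd ℝ ℝ ℝ)))
              + (p.2)⁻¹ • (-((p.2^2)⁻¹ • (ContinuousLinearMap.snd ℝ ℝ ℝ))))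
            + ((p.2^2)⁻¹) • ((p.1 : ℝ) • (ContinuousLinearMap.fst ℝ ℝ ℝ)
                + (p.1 : ℝ) • (ContinuousLinearMap.fst ℝ ℝ ℝ))))
        + (-(p.1^2 * (p.2^2)⁻¹)) • ((deriv (deriv f) (p.1^2/p.2)) •
            ((p.1 ^ 2) • (-((p.2^2)⁻¹ • (ContinuousLinearMap.snd ℝ ℝ ℝ)))
              + (p.2)⁻¹ • ((p.1 : ℝ) • (ContinuousLinearMap.fst ℝ ℝ ℝ)
                  + (p.1 : ℝ) • (ContinuousLinearMap.fst ℝ ℝ ℝ))))) p := by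
  have hinv2 : HasFDerivAt (fun p : ℝ × ℝ => (p.2^2)⁻¹)
      ((p.2)⁻¹ • (-((p.2^2)⁻¹ • (ContinuousLinearMap.snd ℝ ℝ ℝ)))
        + (p.2)⁻¹ • (-((p.2^2)⁻¹ • (ContinuousLinearMap.snd ℝ ℝ ℝ)))) p := by
    simpa only [Pi.mul_def, pow_two, mul_inv] using (hinv hp).mul (hinv hp)
  exact ((hg' hf (p.1^2/p.2)).comp_hasFDerivAt p (Hq hp)).mul ((hx2 p).mul hinv2).neg

private lemma pd3_ev (hf : ContDiff ℝ 2 f) {p : ℝ × ℝ} (hp : p.2 ≠ 0) :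
    pd3 (selfSim f) =ᶠ[nhds p] fun p => deriv f (p.1^2/p.2) * (2 * p.1 * (p.2)⁻¹) := by
  filter_upwards [hUopen.mem_nhds hp] with q hq
  exact pd3_eq hf hq

private lemma pd5_ev (hf : ContDiff ℝ 2 f) {p : ℝ × ℝ} (hp : p.2 ≠ 0) :
    pd5 (selfSim f) =ᶠ[nhds p] fun p => deriv f (p.1^2/p.2) * (-(p.1^2 * (p.2^2)⁻¹)) := by
  filter_upwards [hUopen.mem_nhds hp] with q hq
  exact pd5_eq hf hq

private lemma pd33_eq (hf : ContDiff ℝ 2 f) {p : ℝ × ℝ} (hp : p.2 ≠ 0) :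
    pd3 (pd3 (selfSim f)) p
      = deriv (deriv f) (p.1^2/p.2) * (2*p.1/p.2)^2 + deriv f (p.1^2/p.2) * (2/p.2) := by
  show fderiv ℝ (pd3 (selfSim f)) p (1, 0) = _
  rw [(pd3_ev hf hp).fderiv_eq, (H3 hf hp).fderiv]
  simp
  field_simp
  ring

private lemma pd53_eq (hf : ContDiff ℝ 2 f) {p : ℝ × ℝ} (hp : p.2 ≠ 0) :
    pd5 (pd3 (selfSim f)) p
      = -(deriv (deriv f) (p.1^2/p.2) * (2*p.1/p.2) * (p.1^2/p.2^2))
        - deriv f (p.1^2/p.2) * (2*p.1/p.2^2) := by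
  show fderiv ℝ (pd3 (selfSim f)) p (0, 1) = _
  rw [(pd3_ev hf hp).fderiv_eq, (H3 hf hp).fderiv]
  simp
  field_simp
  ring

private lemma pd55_eq (hf : ContDiff ℝ 2 f) {p : ℝ × ℝ} (hp : p.2 ≠ 0) :
    pd5 (pd5 (selfSim f)) p
      = deriv (deriv f) (p.1^2/p.2) * (p.1^2/p.2^2)^2
        + deriv f (p.1^2/p.2) * (2*p.1^2/p.2^3) := by
  show fderiv ℝ (pd5 (selfSim f)) p (0, 1) = _
  rw [(pd5_ev hf hp).fderiv_eq, (H5 hf hp).fderiv]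
  simp
  field_simp
  ring

end aux

/-- For a self-similar ansatz `Φ = f(x₃²/x₅)` with `f` C², at every point with
`x₅ ≠ 0` (writing `y = x₃²/x₅`) one has
`Φ_{x₃x₃}Φ_{x₅x₅} − (Φ_{x₃x₅})² + (Φ_{x₃x₃})³
  = (2/x₅³)[y² f′(y) f″(y) + 4(f′(y) + 2y f″(y))³]`;
in particular `Φ` satisfies the Hirota-type equation on `{x₅ ≠ 0}` iff `ϕ := f′`
satisfies the ODE `y²ϕϕ′ + 4(ϕ + 2yϕ′)³ = 0` for all `y`. -/
theorem selfSimilar_hirota (f : ℝ → ℝ) (hf : ContDiff ℝ 2 f) :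
    (∀ p : ℝ × ℝ, p.2 ≠ 0 →
      pd3 (pd3 (selfSim f)) p * pd5 (pd5 (selfSim f)) p
          - (pd5 (pd3 (selfSim f)) p)^2 + (pd3 (pd3 (selfSim f)) p)^3
        = (2 / p.2^3) *
            ((p.1^2 / p.2)^2 * deriv f (p.1^2 / p.2) * deriv (deriv f) (p.1^2 / p.2)
              + 4 * (deriv f (p.1^2 / p.2)
                  + 2 * (p.1^2 / p.2) * deriv (deriv f) (p.1^2 / p.2))^3)) ∧
    ((∀ p : ℝ × ℝ, p.2 ≠ 0 →
        pd3 (pd3 (selfSim f)) p * pd5 (pd5 (selfSim f)) p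
          - (pd5 (pd3 (selfSim f)) p)^2 + (pd3 (pd3 (selfSim f)) p)^3 = 0)
      ↔ (∀ y : ℝ, y^2 * deriv f y * deriv (deriv f) y
          + 4 * (deriv f y + 2 * y * deriv (deriv f) y)^3 = 0)) := by
  have key : ∀ p : ℝ × ℝ, p.2 ≠ 0 →
      pd3 (pd3 (selfSim f)) p * pd5 (pd5 (selfSim f)) p
          - (pd5 (pd3 (selfSim f)) p)^2 + (pd3 (pd3 (selfSim f)) p)^3
        = (2 / p.2^3) *
            ((p.1^2 / p.2)^2 * deriv f (p.1^2 / p.2) * deriv (deriv f) (p.1^2 / p.2)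
              + 4 * (deriv f (p.1^2 / p.2)
                  + 2 * (p.1^2 / p.2) * deriv (deriv f) (p.1^2 / p.2))^3) := by
    intro p hp
    rw [pd33_eq hf hp, pd53_eq hf hp, pd55_eq hf hp]
    field_simp
    ring
  refine ⟨key, ?_, ?_⟩
  · intro hpde y
    by_cases hy : 0 ≤ y
    · have h1 : ((Real.sqrt y, (1:ℝ)) : ℝ × ℝ).2 ≠ 0 := one_ne_zero
      have := (key _ h1).symm.trans (hpde _ h1)
      simp only [Real.sq_sqrt hy, div_one] at this
      nlinarith [this]
    · push_neg at hy
      have h1 : ((Real.sqrt (-y), (-1:ℝ)) : ℝ × ℝ).2 ≠ 0 := by norm_num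
      have := (key _ h1).symm.trans (hpde _ h1)
      have hsq : (Real.sqrt (-y))^2 / (-1 : ℝ) = y := by
        rw [Real.sq_sqrt (by linarith)]; ring
      rw [hsq] at this
      nlinarith [this]
  · intro hode p hp
    rw [key p hp, hode (p.1^2/p.2), mul_zero]
end

section
/- Let c ∈ ℝ with c ≠ 0 and let n be a natural number. If the monomial function ϕ(y) = c·yⁿ satisfies y²·ϕ(y)·ϕ'(y) + 4·(ϕ(y) + 2y·ϕ'(y))³ = 0 for all y ∈ ℝ, then n = 1 and c = −1/108. That is, the only nonzero monomial solution of this ODE is ϕ(y) = −y/108. -/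
/-- The only nonzero monomial solution `ϕ(y) = c·yⁿ` of the ODE
`y²ϕϕ′ + 4(ϕ + 2yϕ′)³ = 0` is `ϕ(y) = −y/108`. -/
theorem monomial_solution_of_selfSimilar_ODE (c : ℝ) (hc : c ≠ 0) (n : ℕ)
    (h : ∀ y : ℝ, y^2 * (c * y^n) * deriv (fun t : ℝ => c * t^n) y
        + 4 * (c * y^n + 2 * y * deriv (fun t : ℝ => c * t^n) y)^3 = 0) :
    n = 1 ∧ c = -1/108 := by
  have hderiv : ∀ y : ℝ, deriv (fun t : ℝ => c * t^n) y = c * (n * y^(n-1)) := by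
    intro y
    rw [deriv_const_mul _ (differentiable_pow n).differentiableAt, deriv_pow_field]
  cases n with
  | zero =>
    have h1 := h 1
    rw [hderiv] at h1
    simp at h1
    exact absurd h1 hc
  | succ m =>
    have h1 := h 1
    have h2 := h 2
    rw [hderiv] at h1 h2
    simp only [Nat.add_sub_cancel, Nat.cast_add, Nat.cast_one, one_pow, pow_succ] at h1 h2
    set N : ℝ := (m : ℝ) with hN
    have hN0 : 0 ≤ N := Nat.cast_nonneg m
    set P : ℝ := (2:ℝ)^m with hP
    have hPpos : (0:ℝ) < P := by positivity
    -- h1 : c²(N+1) + 4c³(2N+3)³ = 0 (in raw form); h2 similar with P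
    cases m with
    | zero =>
      refine ⟨rfl, ?_⟩
      have hN' : N = 0 := by simp [hN]
      rw [hN'] at h1
      have key : c^2 * (1 + 108*c) = 0 := by linear_combination h1
      rcases mul_eq_zero.mp key with h0 | h0
      · exact absurd (pow_eq_zero_iff (by norm_num) |>.mp h0) hc
      · linarith
    | succ k =>
      exfalso
      have hP2 : (2:ℝ) ≤ P := by
        rw [hP]
        calc (2:ℝ) = 2^1 := by norm_num
        _ ≤ 2^(k+1) := by apply pow_le_pow_right₀ (by norm_num); omega
      have key : 8*P^2*(c^2*(N+1)*(1-P)) = 0 := by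
        linear_combination h2 - 8*P^3*h1
      have key2 : c^2*(N+1)*(1-P) = 0 := by
        have h8 : (8:ℝ)*P^2 ≠ 0 := by positivity
        exact (mul_eq_zero.mp key).resolve_left h8
      have hA : 0 < c^2*(N+1) := by positivity
      rcases mul_eq_zero.mp key2 with h0 | h0
      · linarith
      · linarith
end
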